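/- In the same p-adic setting, suppose instead that x ∈ ω. Then any linear functional ℓ on the space V of locally constant functions on ω satisfying ℓ(π(n)f) = ψ_x(n)ℓ(f) for all n ∈ N and f ∈ V, and such that ℓ(π(α)f) = α̂(x)ℓ(f) for all Schwartz–Bruhat α, is a scalar multiple of evaluation at x: there exists λ ∈ ℂ with ℓ(f) = λ f(x) for all f ∈ V. -/
import Mathlib


/-- Uniqueness of `(N,ψ_x)`-equivariant functionals, `p`-adic case, second part:
if `x ∈ ω`, any equivariant functional on the space `V` of locally constant vectors is a
scalar multiple of evaluation at `x`. -/
theorem stmt_7 {p : ℕ} [Fact p.Prime] {m : ℕ}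
    -- a perfect pairing between `N = k^m` and `N̄ = k^m`
    (B : (Fin m → ℚ_[p]) →ₗ[ℚ_[p]] (Fin m → ℚ_[p]) →ₗ[ℚ_[p]] ℚ_[p])
    (hB₁ : ∀ n, n ≠ 0 → B n ≠ 0)
    (hB₂ : ∀ y, y ≠ 0 → ∃ n, B n y ≠ 0)
    -- a nontrivial unitary additive character of `k`
    (ψ : AddChar ℚ_[p] ℂ) (hψ : ψ ≠ 1) (hψu : ∀ z, ‖ψ z‖ = 1)
    (ω : Set (Fin m → ℚ_[p])) (hω : IsOpen ω)
    (x : Fin m → ℚ_[p]) (hxω : x ∈ ω)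
    -- an `N`-invariant space of locally constant functions on `ω`
    (V : Submodule ℂ ((↥ω) → ℂ))
    (hVlc : ∀ f ∈ V, IsLocallyConstant f)
    (hVinv : ∀ n : Fin m → ℚ_[p], ∀ f ∈ V,
      (fun y : ↥ω => ψ (B n (y : Fin m → ℚ_[p])) * f y) ∈ V)
    -- the Fourier transform, a bijection of Schwartz–Bruhat spaces
    (Fhat : ((Fin m → ℚ_[p]) → ℂ) → ((Fin m → ℚ_[p]) → ℂ))
    (hFhat_surj : ∀ β : (Fin m → ℚ_[p]) → ℂ, IsLocallyConstant β → HasCompactSupport β →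
      ∃ α, IsLocallyConstant α ∧ HasCompactSupport α ∧ Fhat α = β)
    -- the `(N, ψ_x)`-equivariant functional
    (ℓ : ((↥ω) → ℂ) →ₗ[ℂ] ℂ)
    (hequiv : ∀ n : Fin m → ℚ_[p], ∀ f ∈ V,
      ℓ (fun y : ↥ω => ψ (B n (y : Fin m → ℚ_[p])) * f y) = ψ (B n x) * ℓ f)
    -- `π(α)f = α̂·f` together with `ℓ(π(α)f) = α̂(x)·ℓ(f)`
    (hint : ∀ α : (Fin m → ℚ_[p]) → ℂ, IsLocallyConstant α → HasCompactSupport α →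
      ∀ f ∈ V, ℓ (fun y : ↥ω => Fhat α (y : Fin m → ℚ_[p]) * f y) = Fhat α x * ℓ f) :
    ∃ lam : ℂ, ∀ f ∈ V, ℓ f = lam * f ⟨x, hxω⟩ := by
  -- Key step: the functional vanishes on functions vanishing at `x`.
  have key : ∀ f ∈ V, f ⟨x, hxω⟩ = 0 → ℓ f = 0 := by
    intro f hf hfx
    -- the zero set of `f` is open in `↥ω`; pull it back to an open set `U` of the ambient space
    obtain ⟨U, hU, hUeq⟩ := isOpen_induced_iff.mp (hVlc f hf {0})
    have hxU : x ∈ U := by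
      have : (⟨x, hxω⟩ : ↥ω) ∈ Subtype.val ⁻¹' U := by
        rw [hUeq]; exact hfx
      exact this
    obtain ⟨ε, hε, hball⟩ := Metric.isOpen_iff.mp (hU.inter hω) x ⟨hxU, hxω⟩
    set S : Set (Fin m → ℚ_[p]) :=
      Set.pi Set.univ (fun i => Metric.closedBall (x i) (ε / 2)) with hS
    have hSsub : S ⊆ U ∩ ω := by
      intro y hy
      apply hball
      rw [Metric.mem_ball, dist_pi_lt_iff hε]
      intro i
      exact lt_of_le_of_lt (Metric.mem_closedBall.mp (hy i trivial)) (half_lt_self hε)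
    have hSclopen : IsClopen S := by
      constructor
      · exact isClosed_set_pi fun i _ => Metric.isClosed_closedBall
      · exact isOpen_set_pi Set.finite_univ fun i _ =>
          (IsUltrametricDist.isClopen_closedBall _ (by positivity)).isOpen
    have hScomp : IsCompact S := isCompact_univ_pi fun i => isCompact_closedBall _ _
    have hxS : x ∈ S := fun i _ => Metric.mem_closedBall_self (by positivity)
    set β : (Fin m → ℚ_[p]) → ℂ := S.indicator (fun _ => (1 : ℂ)) with hβ
    have hβlc : IsLocallyConstant β := by
      intro s
      classical
      by_cases h1 : (1 : ℂ) ∈ s <;> by_cases h0 : (0 : ℂ) ∈ s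
      · have : β ⁻¹' s = Set.univ := by
          ext y
          by_cases hy : y ∈ S <;>
            simp [hβ, Set.indicator_of_mem, Set.indicator_of_notMem, hy, h1, h0]
        rw [this]; exact isOpen_univ
      · have : β ⁻¹' s = S := by
          ext y
          by_cases hy : y ∈ S <;>
            simp [hβ, Set.indicator_of_mem, Set.indicator_of_notMem, hy, h1, h0]
        rw [this]; exact hSclopen.isOpen
      · have : β ⁻¹' s = Sᶜ := by
          ext y
          by_cases hy : y ∈ S <;>
            simp [hβ, Set.indicator_of_mem, Set.indicator_of_notMem, hy, h1, h0]
        rw [this]; exact hSclopen.isClosed.isOpen_compl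
      · have : β ⁻¹' s = ∅ := by
          ext y
          by_cases hy : y ∈ S <;>
            simp [hβ, Set.indicator_of_mem, Set.indicator_of_notMem, hy, h1, h0]
        rw [this]; exact isOpen_empty
    have hβcs : HasCompactSupport β :=
      HasCompactSupport.intro hScomp fun y hy => Set.indicator_of_notMem hy _
    obtain ⟨α, hαlc, hαcs, hα⟩ := hFhat_surj β hβlc hβcs
    have h1 := hint α hαlc hαcs f hf
    rw [hα] at h1
    have h2 : (fun y : ↥ω => β (y : Fin m → ℚ_[p]) * f y) = 0 := by
      funext y
      by_cases hy : (y : Fin m → ℚ_[p]) ∈ S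
      · have hyU : y ∈ Subtype.val ⁻¹' U := (hSsub hy).1
        rw [hUeq] at hyU
        have : f y = 0 := hyU
        simp [this]
      · simp [hβ, Set.indicator_of_notMem hy]
    rw [h2, map_zero] at h1
    have hβx : β x = 1 := Set.indicator_of_mem hxS _
    rw [hβx, one_mul] at h1
    exact h1.symm
  classical
  by_cases hg : ∃ g ∈ V, g ⟨x, hxω⟩ ≠ 0
  · obtain ⟨g, hgV, hgx⟩ := hg
    refine ⟨ℓ g / g ⟨x, hxω⟩, fun f hf => ?_⟩
    have hmem : g ⟨x, hxω⟩ • f - f ⟨x, hxω⟩ • g ∈ V :=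
      Submodule.sub_mem V (Submodule.smul_mem V _ hf) (Submodule.smul_mem V _ hgV)
    have hval : (g ⟨x, hxω⟩ • f - f ⟨x, hxω⟩ • g) ⟨x, hxω⟩ = 0 := by
      simp [mul_comm]
    have h0 := key _ hmem hval
    rw [map_sub, map_smul, map_smul] at h0
    have : g ⟨x, hxω⟩ * ℓ f = f ⟨x, hxω⟩ * ℓ g := by
      have := sub_eq_zero.mp h0
      simpa [smul_eq_mul] using this
    field_simp
    linear_combination this
  · push_neg at hg
    exact ⟨0, fun f hf => by rw [key f hf (hg f hf), zero_mul]⟩
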